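/- Let Σ be a k×k positive definite matrix, G a k₂×k matrix of full row rank, H = (H₁, H₂) an invertible k×k matrix with G H₁ = 0. Then the (1,2) block of Λ = Hᵀ Σ⁻¹ H, namely Λ₁₂ = H₁ᵀ Σ⁻¹ H₂, is zero if and only if H₂ = Σ Gᵀ M for some matrix M ∈ ℝ^{k₂×k₂} (necessarily of full rank since H is invertible). -/

import Mathlib

open Matrix

private lemma mulVec_inj_of_ker {n m : Type*} [Fintype n] (A : Matrix m n ℝ)
    (h : ∀ v, A *ᵥ v = 0 → v = 0) : Function.Injective A.mulVec := by
  intro u w huw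
  have := h (u - w) (by rw [Matrix.mulVec_sub, huw, sub_self])
  exact sub_eq_zero.mp this

theorem stmt_16 {k₁ k₂ : ℕ}
    (S : Matrix (Fin k₁ ⊕ Fin k₂) (Fin k₁ ⊕ Fin k₂) ℝ) (hS : S.PosDef)
    (G : Matrix (Fin k₂) (Fin k₁ ⊕ Fin k₂) ℝ) (hG : G.rank = k₂)
    (H₁ : Matrix (Fin k₁ ⊕ Fin k₂) (Fin k₁) ℝ)
    (H₂ : Matrix (Fin k₁ ⊕ Fin k₂) (Fin k₂) ℝ)
    (hH : IsUnit (fromCols H₁ H₂))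
    (hGH₁ : G * H₁ = 0) :
    H₁ᵀ * S⁻¹ * H₂ = 0 ↔
      ∃ M : Matrix (Fin k₂) (Fin k₂) ℝ, IsUnit M ∧ H₂ = S * Gᵀ * M := by
  have hSu : IsUnit S := hS.isUnit
  have hSdet : IsUnit S.det := (isUnit_iff_isUnit_det _).1 hSu
  have hSinv : S⁻¹ * S = 1 := nonsing_inv_mul _ hSdet
  have hSinv' : S * S⁻¹ = 1 := mul_nonsing_inv _ hSdet
  -- injectivity of mulVec by fromCols H₁ H₂
  have hKinj : Function.Injective (fromCols H₁ H₂).mulVec :=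
    mulVec_injective_iff_isUnit.2 hH
  -- H₁ mulVec injective
  have hH₁inj : ∀ v : Fin k₁ → ℝ, H₁ *ᵥ v = 0 → v = 0 := by
    intro v hv
    have h1 : fromCols H₁ H₂ *ᵥ (Sum.elim v 0) = fromCols H₁ H₂ *ᵥ (Sum.elim 0 0) := by
      simp [hv]
    have h2 := congrArg (fun f => f ∘ Sum.inl) (hKinj h1)
    funext i
    exact congrFun h2 i
  -- H₂ mulVec injective
  have hH₂inj : ∀ v : Fin k₂ → ℝ, H₂ *ᵥ v = 0 → v = 0 := by
    intro v hv
    have h1 : fromCols H₁ H₂ *ᵥ (Sum.elim 0 v) = fromCols H₁ H₂ *ᵥ (Sum.elim 0 0) := by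
      simp [hv]
    have h2 := congrArg (fun f => f ∘ Sum.inr) (hKinj h1)
    funext i
    exact congrFun h2 i
  -- G is surjective
  have hGsurj : Function.Surjective G.mulVecLin := by
    rw [← LinearMap.range_eq_top]
    apply Submodule.eq_top_of_finrank_eq
    rw [← Matrix.rank, hG, Module.finrank_fin_fun]
  -- Gᵀ mulVec injective
  have hGTinj : ∀ v : Fin k₂ → ℝ, Gᵀ *ᵥ v = 0 → v = 0 := by
    intro v hv
    funext i
    obtain ⟨x, hx⟩ := hGsurj (Pi.single i 1)
    have h1 : v ⬝ᵥ (G *ᵥ x) = (v ᵥ* G) ⬝ᵥ x := dotProduct_mulVec v G x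
    rw [Matrix.mulVecLin_apply] at hx
    rw [hx, ← Matrix.mulVec_transpose, hv] at h1
    simpa using h1
  constructor
  · intro hΛ
    -- L = [H₁ Gᵀ] is invertible
    have hLu : IsUnit (fromCols H₁ Gᵀ) := by
      rw [Matrix.isUnit_iff_isUnit_det, isUnit_iff_ne_zero]
      intro hdet
      obtain ⟨v, hv0, hv⟩ := (Matrix.exists_mulVec_eq_zero_iff).2 hdet
      have hvelim : Sum.elim (v ∘ Sum.inl) (v ∘ Sum.inr) = v := by
        funext i; cases i <;> rfl
      have hv' : H₁ *ᵥ (v ∘ Sum.inl) + Gᵀ *ᵥ (v ∘ Sum.inr) = 0 := by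
        rw [← fromCols_mulVec_sumElim, hvelim, hv]
      have h1 : G *ᵥ (H₁ *ᵥ (v ∘ Sum.inl)) = 0 := by
        rw [Matrix.mulVec_mulVec, hGH₁, Matrix.zero_mulVec]
      have h2 : G *ᵥ (Gᵀ *ᵥ (v ∘ Sum.inr)) = 0 := by
        have := congrArg (G *ᵥ ·) hv'
        simpa [Matrix.mulVec_add, h1] using this
      have h3 : Gᵀ *ᵥ (v ∘ Sum.inr) = 0 := by
        set w := Gᵀ *ᵥ (v ∘ Sum.inr) with hw
        have hdp : (v ∘ Sum.inr) ⬝ᵥ (G *ᵥ w) = ((v ∘ Sum.inr) ᵥ* G) ⬝ᵥ w :=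
          dotProduct_mulVec _ G w
        rw [h2, dotProduct_zero, ← Matrix.mulVec_transpose, ← hw] at hdp
        exact (dotProduct_self_eq_zero).1 hdp.symm
      have h4 : v ∘ Sum.inr = 0 := hGTinj _ h3
      have h5 : H₁ *ᵥ (v ∘ Sum.inl) = 0 := by
        rw [h3, add_zero] at hv'; exact hv'
      have h6 : v ∘ Sum.inl = 0 := hH₁inj _ h5
      apply hv0
      rw [← hvelim, h4, h6]
      simp
    have hLdet : IsUnit (fromCols H₁ Gᵀ).det := (isUnit_iff_isUnit_det _).1 hLu
    set W : Matrix (Fin k₁ ⊕ Fin k₂) (Fin k₂) ℝ := (fromCols H₁ Gᵀ)⁻¹ * (S⁻¹ * H₂) with hW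
    have key : S⁻¹ * H₂ = H₁ * W.toRows₁ + Gᵀ * W.toRows₂ := by
      rw [← fromCols_mul_fromRows, fromRows_toRows, hW, ← Matrix.mul_assoc,
        mul_nonsing_inv _ hLdet, Matrix.one_mul]
    -- H₁ᵀ H₁ is invertible
    have hGram : IsUnit (H₁ᵀ * H₁) := by
      rw [mulVec_injective_iff_isUnit.symm]
      apply mulVec_inj_of_ker
      intro v hv
      apply hH₁inj
      have hdp : (H₁ *ᵥ v) ⬝ᵥ (H₁ *ᵥ v) = ((H₁ *ᵥ v) ᵥ* H₁) ⬝ᵥ v := dotProduct_mulVec _ H₁ v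
      rw [← Matrix.mulVec_transpose, Matrix.mulVec_mulVec, hv, zero_dotProduct] at hdp
      exact (dotProduct_self_eq_zero).1 hdp
    have hzero : (H₁ᵀ * H₁) * W.toRows₁ = 0 := by
      have e1 : H₁ᵀ * (S⁻¹ * H₂) = 0 := by rw [← Matrix.mul_assoc]; exact hΛ
      rw [key, Matrix.mul_add, ← Matrix.mul_assoc, ← Matrix.mul_assoc] at e1
      have e2 : H₁ᵀ * Gᵀ = 0 := by
        rw [← Matrix.transpose_mul, hGH₁, Matrix.transpose_zero]
      rw [e2, Matrix.zero_mul, add_zero] at e1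
      exact e1
    have hW₁ : W.toRows₁ = 0 := by
      have hGdet : IsUnit (H₁ᵀ * H₁).det := (isUnit_iff_isUnit_det _).1 hGram
      calc W.toRows₁ = (H₁ᵀ * H₁)⁻¹ * ((H₁ᵀ * H₁) * W.toRows₁) := by
            rw [← Matrix.mul_assoc, nonsing_inv_mul _ hGdet, Matrix.one_mul]
        _ = 0 := by rw [hzero, Matrix.mul_zero]
    have hfin : H₂ = S * Gᵀ * W.toRows₂ := by
      calc H₂ = (S * S⁻¹) * H₂ := by rw [hSinv', Matrix.one_mul]
        _ = S * (S⁻¹ * H₂) := by rw [Matrix.mul_assoc]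
        _ = S * (Gᵀ * W.toRows₂) := by rw [key, hW₁, Matrix.mul_zero, zero_add]
        _ = S * Gᵀ * W.toRows₂ := by rw [Matrix.mul_assoc]
    refine ⟨W.toRows₂, ?_, hfin⟩
    rw [mulVec_injective_iff_isUnit.symm]
    apply mulVec_inj_of_ker
    intro v hv
    apply hH₂inj
    rw [hfin, ← Matrix.mulVec_mulVec, ← Matrix.mulVec_mulVec, hv, Matrix.mulVec_zero,
      Matrix.mulVec_zero]
  · rintro ⟨M, hM, rfl⟩
    calc H₁ᵀ * S⁻¹ * (S * Gᵀ * M) = H₁ᵀ * (S⁻¹ * S) * Gᵀ * M := by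
          simp only [Matrix.mul_assoc]
        _ = (G * H₁)ᵀ * M := by rw [hSinv, Matrix.mul_one, Matrix.transpose_mul]
        _ = 0 := by rw [hGH₁, transpose_zero, Matrix.zero_mul]
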